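/- Let ρ(l) = l - 5al³ + 10a²l⁵ with a > 0. The quantity ρ(l)ρ'''(l) - ρ'(l)ρ''(l) equals 100a²l³(1 + 12al² - 40a²l⁴), and this is strictly positive for all l in the interval (0, 1/√(5a)]. -/

import Mathlib

/-- For `ρ(l) = l - 5al³ + 10a²l⁵` with `a > 0`, one has
`ρ ρ''' - ρ' ρ'' = 100a²l³(1 + 12al² - 40a²l⁴)`, and this quantity is strictly
positive on `(0, 1/√(5a)]`. -/
theorem stmt1 (a : ℝ) (ha : 0 < a) :
    let ρ : ℝ → ℝ := fun l => l - 5 * a * l ^ 3 + 10 * a ^ 2 * l ^ 5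
    (∀ l : ℝ, ρ l * iteratedDeriv 3 ρ l - deriv ρ l * iteratedDeriv 2 ρ l
        = 100 * a ^ 2 * l ^ 3 * (1 + 12 * a * l ^ 2 - 40 * a ^ 2 * l ^ 4)) ∧
    (∀ l ∈ Set.Ioc (0 : ℝ) (1 / Real.sqrt (5 * a)),
        0 < ρ l * iteratedDeriv 3 ρ l - deriv ρ l * iteratedDeriv 2 ρ l) := by
  intro ρ
  have hd1 : deriv ρ = fun l => 1 - 15 * a * l ^ 2 + 50 * a ^ 2 * l ^ 4 := by
    funext l
    have h : HasDerivAt ρ (1 - 15 * a * l ^ 2 + 50 * a ^ 2 * l ^ 4) l := by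
      have := ((hasDerivAt_id l).sub ((hasDerivAt_pow 3 l).const_mul (5 * a))).add
        ((hasDerivAt_pow 5 l).const_mul (10 * a ^ 2))
      exact this.congr_deriv (by ring)
    exact h.deriv
  have hd2 : deriv (deriv ρ) = fun l => -30 * a * l + 200 * a ^ 2 * l ^ 3 := by
    rw [hd1]; funext l
    have h : HasDerivAt (fun l : ℝ => 1 - 15 * a * l ^ 2 + 50 * a ^ 2 * l ^ 4)
        (-30 * a * l + 200 * a ^ 2 * l ^ 3) l := by
      have := ((hasDerivAt_const l (1:ℝ)).sub ((hasDerivAt_pow 2 l).const_mul (15 * a))).add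
        ((hasDerivAt_pow 4 l).const_mul (50 * a ^ 2))
      exact this.congr_deriv (by ring)
    exact h.deriv
  have hd3 : deriv (deriv (deriv ρ)) = fun l => -30 * a + 600 * a ^ 2 * l ^ 2 := by
    rw [hd2]; funext l
    have h : HasDerivAt (fun l : ℝ => -30 * a * l + 200 * a ^ 2 * l ^ 3)
        (-30 * a + 600 * a ^ 2 * l ^ 2) l := by
      have := ((hasDerivAt_id l).const_mul (-30 * a)).add
        ((hasDerivAt_pow 3 l).const_mul (200 * a ^ 2))
      exact this.congr_deriv (by ring)
    exact h.deriv
  have h2 : iteratedDeriv 2 ρ = fun l => -30 * a * l + 200 * a ^ 2 * l ^ 3 := by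
    rw [show (2:ℕ) = 1 + 1 from rfl, iteratedDeriv_succ, iteratedDeriv_one, hd2]
  have h3 : iteratedDeriv 3 ρ = fun l => -30 * a + 600 * a ^ 2 * l ^ 2 := by
    rw [show (3:ℕ) = 2 + 1 from rfl, iteratedDeriv_succ, h2, ← hd2, hd3]
  have key : ∀ l : ℝ, ρ l * iteratedDeriv 3 ρ l - deriv ρ l * iteratedDeriv 2 ρ l
      = 100 * a ^ 2 * l ^ 3 * (1 + 12 * a * l ^ 2 - 40 * a ^ 2 * l ^ 4) := by
    intro l
    rw [hd1, h2, h3]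
    show (l - 5 * a * l ^ 3 + 10 * a ^ 2 * l ^ 5) * (-30 * a + 600 * a ^ 2 * l ^ 2)
      - (1 - 15 * a * l ^ 2 + 50 * a ^ 2 * l ^ 4) * (-30 * a * l + 200 * a ^ 2 * l ^ 3) = _
    ring
  refine ⟨key, fun l hl => ?_⟩
  rw [key l]
  obtain ⟨hl0, hl1⟩ := hl
  have h5a : (0:ℝ) < 5 * a := by linarith
  have hs : Real.sqrt (5 * a) > 0 := Real.sqrt_pos.2 h5a
  have hls : l * Real.sqrt (5 * a) ≤ 1 := by
    exact (le_div_iff₀ hs).1 hl1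
  have ht : a * l ^ 2 ≤ 1 / 5 := by
    have h1 : (l * Real.sqrt (5 * a)) ^ 2 ≤ 1 := by
      have : 0 ≤ l * Real.sqrt (5 * a) := by positivity
      nlinarith
    have h2 : (l * Real.sqrt (5 * a)) ^ 2 = 5 * a * l ^ 2 := by
      rw [mul_pow, Real.sq_sqrt h5a.le]; ring
    rw [h2] at h1; linarith
  have ht0 : 0 < a * l ^ 2 := by positivity
  have hpos : 0 < 1 + 12 * a * l ^ 2 - 40 * a ^ 2 * l ^ 4 := by
    nlinarith [sq_nonneg (a * l ^ 2)]
  positivity
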